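/- Let Σ be an r×r real symmetric positive definite matrix, let H be an r×k real matrix with k ≤ r such that HᵀΣH is invertible, let S be an r×r real symmetric matrix, and let c ≥ 0 be such that S − c·Σ⁻¹ is positive semidefinite. Then tr[ (Σ − Σ·H·(HᵀΣH)⁻¹·Hᵀ·Σ) · S ] ≥ (r − k)·c. -/

import Mathlib

open Matrix

lemma trace_nonneg_of_psd {n : Type*} [Fintype n] {A : Matrix n n ℝ}
    (hA : A.PosSemidef) : 0 ≤ A.trace := by
  classical
  rw [Matrix.trace]
  refine Finset.sum_nonneg fun i _ => ?_
  have h := hA.diag_nonneg (i := i)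
  simpa [dotProduct, Matrix.mulVec, Pi.single_apply, Matrix.diag] using h

open scoped MatrixOrder in
lemma trace_mul_nonneg_of_psd {n : Type*} [Fintype n] [DecidableEq n]
    {A B : Matrix n n ℝ} (hA : A.PosSemidef) (hB : B.PosSemidef) :
    0 ≤ (A * B).trace := by
  have h1 : A * B = A * ((CFC.sqrt B) * (CFC.sqrt B)) := by rw [CFC.sqrt_mul_sqrt_self B hB.nonneg]
  have h2 : (A * ((CFC.sqrt B) * (CFC.sqrt B))).trace = ((CFC.sqrt B) * A * (CFC.sqrt B)).trace := by
    rw [← Matrix.mul_assoc, Matrix.trace_mul_cycle]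
  have h3 : ((CFC.sqrt B)ᴴ * A * (CFC.sqrt B)).PosSemidef := hA.conjTranspose_mul_mul_same _
  have h4 : (CFC.sqrt B)ᴴ = (CFC.sqrt B) := (CFC.sqrt_nonneg B).posSemidef.isHermitian
  rw [h4] at h3
  rw [h1, h2]
  exact trace_nonneg_of_psd h3

theorem stmt7 (r k : ℕ) (hk : k ≤ r)
    (S : Matrix (Fin r) (Fin r) ℝ) (hS : S.PosDef)
    (H : Matrix (Fin r) (Fin k) ℝ) (hH : IsUnit (Hᵀ * S * H))
    (T : Matrix (Fin r) (Fin r) ℝ) (hT : T.IsHermitian)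
    (c : ℝ) (hc : 0 ≤ c) (hTc : (T - c • S⁻¹).PosSemidef) :
    ((r : ℝ) - (k : ℝ)) * c ≤
      Matrix.trace ((S - S * H * (Hᵀ * S * H)⁻¹ * Hᵀ * S) * T) := by
  set B : Matrix (Fin k) (Fin k) ℝ := (Hᵀ * S * H)⁻¹ with hB
  set M : Matrix (Fin r) (Fin r) ℝ := S - S * H * B * Hᵀ * S with hM
  have hGdet : IsUnit (Hᵀ * S * H).det := (Matrix.isUnit_iff_isUnit_det _).mp hH
  have hBG : B * (Hᵀ * S * H) = 1 := Matrix.nonsing_inv_mul _ hGdet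
  have hGB : (Hᵀ * S * H) * B = 1 := Matrix.mul_nonsing_inv _ hGdet
  have hSsym : Sᵀ = S := hS.isHermitian
  have hGsym : (Hᵀ * S * H)ᵀ = Hᵀ * S * H := by
    rw [Matrix.transpose_mul, Matrix.transpose_mul, hSsym, Matrix.transpose_transpose,
      Matrix.mul_assoc]
  have hBsym : Bᵀ = B := by
    rw [hB, Matrix.transpose_nonsing_inv, hGsym]
  -- M = Aᵀ S A with A = 1 - H B Hᵀ S
  set A : Matrix (Fin r) (Fin r) ℝ := 1 - H * B * Hᵀ * S with hA
  have hAt : Aᵀ = 1 - S * H * B * Hᵀ := by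
    rw [hA]
    simp [Matrix.transpose_mul, hSsym, hBsym, Matrix.mul_assoc]
  have hcancel : Hᵀ * (S * (H * (B * (Hᵀ * S)))) = Hᵀ * S := by
    simp only [← Matrix.mul_assoc]
    rw [hGB, Matrix.one_mul]
  have hMA : M = Aᵀ * S * A := by
    rw [hAt, hA, hM]
    simp only [Matrix.sub_mul, Matrix.mul_sub, Matrix.one_mul, Matrix.mul_one]
    simp only [Matrix.mul_assoc]
    rw [hcancel]
    abel
  have hMpsd : M.PosSemidef := by
    rw [hMA]
    have h := hS.posSemidef.conjTranspose_mul_mul_same A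
    have : Aᴴ = Aᵀ := rfl
    rwa [this] at h
  -- trace (M * S⁻¹) = r - k
  have hSdet : IsUnit S.det := hS.det_pos.ne'.isUnit
  have hSSinv : S * S⁻¹ = 1 := Matrix.mul_nonsing_inv _ hSdet
  have htrMS : (M * S⁻¹).trace = (r : ℝ) - (k : ℝ) := by
    rw [hM, Matrix.sub_mul]
    have h1 : (S * S⁻¹).trace = (r : ℝ) := by
      rw [hSSinv, Matrix.trace_one]; simp
    have h2 : (S * H * B * Hᵀ * S * S⁻¹).trace = (k : ℝ) := by
      have e1 : S * H * B * Hᵀ * S * S⁻¹ = S * H * B * Hᵀ := by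
        rw [Matrix.mul_assoc (S * H * B * Hᵀ), hSSinv, Matrix.mul_one]
      rw [e1, Matrix.trace_mul_comm (S * H * B) Hᵀ]
      have e2 : Hᵀ * (S * H * B) = 1 := by
        rw [← hGB]; simp [Matrix.mul_assoc]
      rw [e2, Matrix.trace_one]; simp
    rw [Matrix.trace_sub, h1, h2]
  -- main estimate
  have hsplit : M * T = M * (T - c • S⁻¹) + c • (M * S⁻¹) := by
    rw [Matrix.mul_sub, Matrix.mul_smul]
    abel
  have hpos : 0 ≤ (M * (T - c • S⁻¹)).trace := trace_mul_nonneg_of_psd hMpsd hTc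
  have hfin : (M * T).trace = (M * (T - c • S⁻¹)).trace + c * ((r:ℝ) - (k:ℝ)) := by
    rw [hsplit, Matrix.trace_add, Matrix.trace_smul, htrMS]
    simp
  rw [hfin]
  nlinarith [hpos]
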